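/- arXiv:1911.03433 — 3 statements merged into one kernel-verified Lean document; each statement's English description precedes it below -/
import Mathlib

section
/- Under the profile hypotheses, for every d > 0 and every x ∈ ℝ² ∖ {d·e₁, −d·e₁} one has the exact identity Im(∂_{x₂}V(x)/V(x)) = 2d·(x₁² − d² − x₂²)/(r₁(x)²·r₋₁(x)²), and |Re(∂_{x₂}V(x)/V(x))| ≤ ρ′(r₁(x))/ρ(r₁(x)) + ρ′(r₋₁(x))/ρ(r₋₁(x)). Consequently there exists C > 0, depending only on C₀ and ρ(1), such that for every d > 0 and every x with r₁(x) ≥ 1 and r₋₁(x) ≥ 1: |i·∂_{x₂}V(x)/V(x) + 2d·(x₁² − d² − x₂²)/(r₁(x)²·r₋₁(x)²)| ≤ C·(1/r₁(x)³ + 1/r₋₁(x)³); in particular the leading-order term of i·∂_{x₂}V/V is real-valued with explicit dependence on d. -/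
noncomputable section

open Complex MeasureTheory Filter Topology Set

/-- The plane `ℝ²`, with coordinates `x.1`, `x.2`. -/
abbrev R2 : Type := ℝ × ℝ

/-- The Euclidean norm on `ℝ²`. -/
def rE (x : R2) : ℝ := Real.sqrt (x.1 ^ 2 + x.2 ^ 2)

/-- The first basis vector `e₁ = (1,0)`. -/
def e1 : R2 := (1, 0)

/-- Partial derivative `∂_{x₁}` of a complex-valued function on `ℝ²`. -/
def pd1 (f : R2 → ℂ) (x : R2) : ℂ := fderiv ℝ f x (1, 0)

/-- Partial derivative `∂_{x₂}` of a complex-valued function on `ℝ²`. -/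
def pd2 (f : R2 → ℂ) (x : R2) : ℂ := fderiv ℝ f x (0, 1)

/-- The Laplacian of a complex-valued function on `ℝ²`. -/
def lap (f : R2 → ℂ) (x : R2) : ℂ := pd1 (pd1 f) x + pd2 (pd2 f) x

/-- Partial derivative `∂_{x₁}` of a real-valued function on `ℝ²`. -/
def pd1R (f : R2 → ℝ) (x : R2) : ℝ := fderiv ℝ f x (1, 0)

/-- Partial derivative `∂_{x₂}` of a real-valued function on `ℝ²`. -/
def pd2R (f : R2 → ℝ) (x : R2) : ℝ := fderiv ℝ f x (0, 1)

/-- The Laplacian of a real-valued function on `ℝ²`. -/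
def lapR (f : R2 → ℝ) (x : R2) : ℝ := pd1R (pd1R f) x + pd2R (pd2R f) x

/-- Euclidean modulus `|∇f|` of the gradient of a complex-valued function. -/
def gradAbs (f : R2 → ℂ) (x : R2) : ℝ :=
  Real.sqrt (Complex.normSq (pd1 f x) + Complex.normSq (pd2 f x))

/-- Euclidean modulus `|∇²f|` of the Hessian of a complex-valued function. -/
def hessAbs (f : R2 → ℂ) (x : R2) : ℝ :=
  Real.sqrt (Complex.normSq (pd1 (pd1 f) x) + Complex.normSq (pd2 (pd1 f) x) +
    Complex.normSq (pd1 (pd2 f) x) + Complex.normSq (pd2 (pd2 f) x))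

/-- Euclidean modulus `|∇f|` of the gradient of a real-valued function. -/
def gradAbsR (f : R2 → ℝ) (x : R2) : ℝ :=
  Real.sqrt (pd1R f x ^ 2 + pd2R f x ^ 2)

/-- Euclidean modulus `|∇²f|` of the Hessian of a real-valued function. -/
def hessAbsR (f : R2 → ℝ) (x : R2) : ℝ :=
  Real.sqrt (pd1R (pd1R f) x ^ 2 + pd2R (pd1R f) x ^ 2 +
    pd1R (pd2R f) x ^ 2 + pd2R (pd2R f) x ^ 2)

/-- `r₁(x) = |x − d·e₁|`. -/
def r1 (d : ℝ) (x : R2) : ℝ := rE (x - d • e1)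

/-- `r₋₁(x) = |x + d·e₁|`. -/
def rm1 (d : ℝ) (x : R2) : ℝ := rE (x + d • e1)

/-- `r̃(x) = min (r₁(x), r₋₁(x))`. -/
def rt (d : ℝ) (x : R2) : ℝ := min (r1 d x) (rm1 d x)

/-- The profile hypotheses: `ρ` is continuous on `[0,∞)`, `C²` on `(0,∞)`, with
`ρ(0) = 0`, `0 < ρ < 1` on `(0,∞)`, and the decay bounds `1 − ρ² ≤ C₀/(1+r)²`,
`0 < ρ′ ≤ C₀/(1+r)³`, `|ρ″| ≤ C₀/(1+r)³`; `V₁` is the associated degree-one vortex,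
assumed to be `C²` on `ℝ²`. -/
structure VortexProfile where
  ρ : ℝ → ℝ
  C₀ : ℝ
  C₀_pos : 0 < C₀
  rho_continuous : ContinuousOn ρ (Set.Ici 0)
  rho_smooth : ContDiffOn ℝ 2 ρ (Set.Ioi 0)
  rho_zero : ρ 0 = 0
  rho_pos : ∀ r : ℝ, 0 < r → 0 < ρ r
  rho_lt_one : ∀ r : ℝ, 0 < r → ρ r < 1
  mod_bound : ∀ r : ℝ, 0 < r → 1 - ρ r ^ 2 ≤ C₀ / (1 + r) ^ 2
  deriv_pos : ∀ r : ℝ, 0 < r → 0 < deriv ρ r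
  deriv_bound : ∀ r : ℝ, 0 < r → deriv ρ r ≤ C₀ / (1 + r) ^ 3
  deriv2_bound : ∀ r : ℝ, 0 < r → |deriv (deriv ρ) r| ≤ C₀ / (1 + r) ^ 3
  V₁ : R2 → ℂ
  V₁_zero : V₁ 0 = 0
  V₁_polar : ∀ x : R2, x ≠ 0 →
    V₁ x = (ρ (rE x) : ℂ) * ((x.1 : ℂ) + (x.2 : ℂ) * Complex.I) / (rE x : ℂ)
  V₁_smooth : ContDiff ℝ 2 V₁

/-- The antivortex `V₋₁ = conj V₁`. -/
def VmOne (P : VortexProfile) : R2 → ℂ := fun y => (starRingEnd ℂ) (P.V₁ y)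

/-- `V(x) = V₁(x − d·e₁)·V₋₁(x + d·e₁)`. -/
def VP (P : VortexProfile) (d : ℝ) (x : R2) : ℂ :=
  P.V₁ (x - d • e1) * VmOne P (x + d • e1)
open Complex

lemma rE_sq (y : R2) : rE y ^ 2 = y.1 ^ 2 + y.2 ^ 2 :=
  Real.sq_sqrt (by positivity)

lemma rE_pos {y : R2} (hy : y ≠ 0) : 0 < rE y := by
  apply Real.sqrt_pos.mpr
  have : y.1 ≠ 0 ∨ y.2 ≠ 0 := by
    by_contra hc
    push_neg at hc
    exact hy (Prod.ext hc.1 hc.2)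
  rcases this with h | h <;> positivity

lemma c_ne_zero {y : R2} (hy : y ≠ 0) : (y.1 : ℂ) + (y.2 : ℂ) * Complex.I ≠ 0 := by
  intro h
  apply hy
  have h1 : y.1 = 0 := by simpa using congrArg Complex.re h
  have h2 : y.2 = 0 := by simpa using congrArg Complex.im h
  exact Prod.ext h1 h2

lemma V1_ne_zero (P : VortexProfile) {y : R2} (hy : y ≠ 0) : P.V₁ y ≠ 0 := by
  rw [P.V₁_polar y hy]
  have hr := rE_pos hy
  apply div_ne_zero (mul_ne_zero ?_ (c_ne_zero hy)) (by exact_mod_cast hr.ne')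
  exact_mod_cast (P.rho_pos _ hr).ne'

lemma VortexProfile.hasDerivAt_rho (P : VortexProfile) {r : ℝ} (hr : 0 < r) :
    HasDerivAt P.ρ (deriv P.ρ r) r := by
  have h := (P.rho_smooth.differentiableOn (by norm_num)).differentiableAt
    (Ioi_mem_nhds hr)
  exact h.hasDerivAt

lemma pd2_V1 (P : VortexProfile) {y : R2} (hy : y ≠ 0) :
    pd2 P.V₁ y
      = ((↑(deriv P.ρ (rE y) * (y.2 / rE y)) * ((y.1 : ℂ) + (y.2 : ℂ) * Complex.I)
            + ↑(P.ρ (rE y)) * Complex.I) * (↑(rE y) : ℂ)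
          - ↑(P.ρ (rE y)) * ((y.1 : ℂ) + (y.2 : ℂ) * Complex.I) * (↑(y.2 / rE y) : ℂ))
        / (↑(rE y) : ℂ) ^ 2 := by
  have hr : 0 < rE y := rE_pos hy
  have hrne : y.1 ^ 2 + y.2 ^ 2 ≠ 0 := by
    have := rE_sq y; nlinarith
  -- the curve t ↦ (y.1, t)
  have hc : HasDerivAt (fun t : ℝ => ((y.1, t) : R2)) ((0 : ℝ), (1 : ℝ)) y.2 :=
    (hasDerivAt_const y.2 y.1).prodMk (hasDerivAt_id y.2)
  have hF : HasFDerivAt P.V₁ (fderiv ℝ P.V₁ y) y :=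
    ((P.V₁_smooth.differentiable (by norm_num)) y).hasFDerivAt
  have hcomp : HasDerivAt (fun t : ℝ => P.V₁ (y.1, t))
      (fderiv ℝ P.V₁ y ((0 : ℝ), (1 : ℝ))) y.2 :=
    hF.comp_hasDerivAt y.2 hc
  -- derivative of sqrt(y.1^2 + t^2)
  have hs : HasDerivAt (fun t : ℝ => Real.sqrt (y.1 ^ 2 + t ^ 2)) (y.2 / rE y) y.2 := by
    have hin : HasDerivAt (fun t : ℝ => y.1 ^ 2 + t ^ 2) (2 * y.2) y.2 := by
      simpa using (hasDerivAt_pow 2 y.2).const_add (y.1 ^ 2)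
    have := (Real.hasDerivAt_sqrt hrne).comp y.2 hin
    convert this using 1
    show y.2 / rE y = 1 / (2 * rE y) * (2 * y.2)
    field_simp
    all_goals rfl
  have hρ : HasDerivAt (fun t : ℝ => P.ρ (Real.sqrt (y.1 ^ 2 + t ^ 2)))
      (deriv P.ρ (rE y) * (y.2 / rE y)) y.2 :=
    (P.hasDerivAt_rho hr).comp y.2 hs
  have h1 : HasDerivAt (fun t : ℝ => ((P.ρ (Real.sqrt (y.1 ^ 2 + t ^ 2)) : ℝ) : ℂ))
      (↑(deriv P.ρ (rE y) * (y.2 / rE y))) y.2 := hρ.ofReal_comp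
  have h2 : HasDerivAt (fun t : ℝ => (y.1 : ℂ) + (t : ℂ) * Complex.I) Complex.I y.2 := by
    simpa using (((hasDerivAt_id y.2).ofReal_comp).mul_const Complex.I).const_add (y.1 : ℂ)
  have hs' : HasDerivAt (fun t : ℝ => ((Real.sqrt (y.1 ^ 2 + t ^ 2) : ℝ) : ℂ))
      (↑(y.2 / rE y)) y.2 := hs.ofReal_comp
  have hg : HasDerivAt (fun t : ℝ =>
      (↑(P.ρ (Real.sqrt (y.1 ^ 2 + t ^ 2))) : ℂ) * ((y.1 : ℂ) + (t : ℂ) * Complex.I)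
        / ((Real.sqrt (y.1 ^ 2 + t ^ 2) : ℝ) : ℂ))
      (((↑(deriv P.ρ (rE y) * (y.2 / rE y)) * ((y.1 : ℂ) + (y.2 : ℂ) * Complex.I)
            + ↑(P.ρ (rE y)) * Complex.I) * (↑(rE y) : ℂ)
          - ↑(P.ρ (rE y)) * ((y.1 : ℂ) + (y.2 : ℂ) * Complex.I) * (↑(y.2 / rE y) : ℂ))
        / (↑(rE y) : ℂ) ^ 2) y.2 :=
    (h1.mul h2).div hs' (by exact_mod_cast hr.ne')
  -- eventual equality with V₁ along the curve
  have hne : ∀ᶠ t in nhds y.2, ((y.1, t) : R2) ≠ 0 := by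
    rcases eq_or_ne y.1 0 with h | h
    · have hy2 : y.2 ≠ 0 := by
        intro h2; exact hy (Prod.ext h h2)
      filter_upwards [eventually_ne_nhds hy2] with t ht h0
      exact ht (congrArg Prod.snd h0)
    · filter_upwards with t h0
      exact h (congrArg Prod.fst h0)
  have hEq : (fun t : ℝ => P.V₁ (y.1, t)) =ᶠ[nhds y.2] (fun t : ℝ =>
      (↑(P.ρ (Real.sqrt (y.1 ^ 2 + t ^ 2))) : ℂ) * ((y.1 : ℂ) + (t : ℂ) * Complex.I)
        / ((Real.sqrt (y.1 ^ 2 + t ^ 2) : ℝ) : ℂ)) := by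
    filter_upwards [hne] with t ht
    rw [P.V₁_polar _ ht]
    rfl
  have hV := hg.congr_of_eventuallyEq hEq
  exact hcomp.unique hV

lemma pd2_V1_div (P : VortexProfile) {y : R2} (hy : y ≠ 0) :
    pd2 P.V₁ y / P.V₁ y
      = ↑(deriv P.ρ (rE y) * y.2 / (rE y * P.ρ (rE y))) + ↑(y.1 / rE y ^ 2) * Complex.I := by
  have hr : 0 < rE y := rE_pos hy
  have hρ : P.ρ (rE y) ≠ 0 := ne_of_gt (P.rho_pos _ hr)
  have hc : (y.1 : ℂ) + (y.2 : ℂ) * Complex.I ≠ 0 := c_ne_zero hy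
  have hrc : ((rE y : ℝ) : ℂ) ≠ 0 := by exact_mod_cast hr.ne'
  have hρc : ((P.ρ (rE y) : ℝ) : ℂ) ≠ 0 := by exact_mod_cast hρ
  have hsq : ((rE y : ℝ) : ℂ) ^ 2 = (y.1 : ℂ) ^ 2 + (y.2 : ℂ) ^ 2 := by
    exact_mod_cast congrArg (fun t : ℝ => (t : ℂ)) (rE_sq y)
  rw [pd2_V1 P hy, P.V₁_polar y hy]
  push_cast
  field_simp
  linear_combination (Complex.I * (↑(P.ρ (rE y)) : ℂ)) * hsq +
    (-(↑y.1 : ℂ) * ↑y.2 * (↑(P.ρ (rE y)) : ℂ)) * Complex.I_sq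


lemma pd2_VP (P : VortexProfile) (d : ℝ) (x : R2) :
    pd2 (VP P d) x
      = pd2 P.V₁ (x - d • e1) * (starRingEnd ℂ) (P.V₁ (x + d • e1))
        + P.V₁ (x - d • e1) * (starRingEnd ℂ) (pd2 P.V₁ (x + d • e1)) := by
  have hd : Differentiable ℝ P.V₁ := P.V₁_smooth.differentiable (by norm_num)
  have hsub : HasFDerivAt (fun z : R2 => z - d • e1)
      (ContinuousLinearMap.id ℝ R2) x := (hasFDerivAt_id x).sub_const (d • e1)
  have hadd : HasFDerivAt (fun z : R2 => z + d • e1)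
      (ContinuousLinearMap.id ℝ R2) x := (hasFDerivAt_id x).add_const (d • e1)
  have h1 : HasFDerivAt (fun z : R2 => P.V₁ (z - d • e1))
      ((fderiv ℝ P.V₁ (x - d • e1)).comp (ContinuousLinearMap.id ℝ R2)) x :=
    (hd (x - d • e1)).hasFDerivAt.comp x hsub
  have h2 : HasFDerivAt (fun z : R2 => (starRingEnd ℂ) (P.V₁ (z + d • e1)))
      ((Complex.conjLIE.toContinuousLinearEquiv.toContinuousLinearMap).comp
        ((fderiv ℝ P.V₁ (x + d • e1)).comp (ContinuousLinearMap.id ℝ R2))) x :=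
    (Complex.conjLIE.toContinuousLinearEquiv.toContinuousLinearMap.hasFDerivAt).comp x
      ((hd (x + d • e1)).hasFDerivAt.comp x hadd)
  have hmul := h1.fun_mul h2
  have hVP : VP P d = fun y : R2 => P.V₁ (y - d • e1) * (starRingEnd ℂ) (P.V₁ (y + d • e1)) :=
    rfl
  have : pd2 (VP P d) x = (fderiv ℝ (VP P d) x) (0, 1) := rfl
  rw [this, hVP, hmul.fderiv]
  simp [pd2]
  ring

lemma pd2_VP_div (P : VortexProfile) {d : ℝ} {x : R2}
    (h1 : x - d • e1 ≠ 0) (h2 : x + d • e1 ≠ 0) :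
    pd2 (VP P d) x / VP P d x
      = pd2 P.V₁ (x - d • e1) / P.V₁ (x - d • e1)
        + (starRingEnd ℂ) (pd2 P.V₁ (x + d • e1) / P.V₁ (x + d • e1)) := by
  have n1 : P.V₁ (x - d • e1) ≠ 0 := V1_ne_zero P h1
  have n2 : P.V₁ (x + d • e1) ≠ 0 := V1_ne_zero P h2
  have n2' : (starRingEnd ℂ) (P.V₁ (x + d • e1)) ≠ 0 := by simpa using n2
  rw [pd2_VP]
  have hVP : VP P d x = P.V₁ (x - d • e1) * (starRingEnd ℂ) (P.V₁ (x + d • e1)) := rfl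
  rw [hVP, map_div₀]
  field_simp

lemma sub_smul_e1 (d : ℝ) (x : R2) : x - d • e1 = (x.1 - d, x.2) := by
  simp [e1, Prod.ext_iff]

lemma add_smul_e1 (d : ℝ) (x : R2) : x + d • e1 = (x.1 + d, x.2) := by
  simp [e1, Prod.ext_iff]

lemma abs_snd_le_rE (y : R2) : |y.2| ≤ rE y := by
  rw [← Real.sqrt_sq_eq_abs]
  exact Real.sqrt_le_sqrt (by nlinarith [sq_nonneg y.1])

lemma reTermBound (P : VortexProfile) {r b : ℝ} (hr : 0 < r) (hb : |b| ≤ r) :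
    |deriv P.ρ r * b / (r * P.ρ r)| ≤ deriv P.ρ r / P.ρ r := by
  have hρ := P.rho_pos r hr
  have hρ' := P.deriv_pos r hr
  rw [abs_div, abs_mul, abs_of_pos hρ', abs_of_pos (mul_pos hr hρ)]
  rw [div_le_div_iff₀ (by positivity) hρ]
  calc deriv P.ρ r * |b| * P.ρ r ≤ deriv P.ρ r * r * P.ρ r := by gcongr
  _ = deriv P.ρ r * (r * P.ρ r) := by ring

lemma rho_one_le (P : VortexProfile) {r : ℝ} (hr : 1 ≤ r) : P.ρ 1 ≤ P.ρ r := by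
  rcases eq_or_lt_of_le hr with h | h
  · rw [← h]
  · have hmono : StrictMonoOn P.ρ (Set.Ici 1) := by
      apply strictMonoOn_of_deriv_pos (convex_Ici 1)
      · exact P.rho_continuous.mono (fun t (ht : t ∈ Set.Ici 1) => Set.mem_Ici.mpr (le_trans zero_le_one (Set.mem_Ici.mp ht)))
      · intro t ht
        rw [interior_Ici] at ht
        exact P.deriv_pos t (lt_trans zero_lt_one ht)
    exact le_of_lt (hmono Set.self_mem_Ici hr h)

lemma tailBound (P : VortexProfile) {r : ℝ} (hr : 1 ≤ r) :
    deriv P.ρ r / P.ρ r ≤ (P.C₀ / P.ρ 1) * (1 / r ^ 3) := by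
  have hr0 : (0 : ℝ) < r := lt_of_lt_of_le one_pos hr
  have h1 : deriv P.ρ r ≤ P.C₀ / r ^ 3 := by
    refine le_trans (P.deriv_bound r hr0) ?_
    gcongr
    · exact le_of_lt P.C₀_pos
    · linarith
  have h2 : P.ρ 1 ≤ P.ρ r := rho_one_le P hr
  calc deriv P.ρ r / P.ρ r ≤ (P.C₀ / r ^ 3) / P.ρ 1 :=
        div_le_div₀ (div_nonneg (le_of_lt P.C₀_pos) (by positivity)) h1 (P.rho_pos 1 one_pos) h2
  _ = (P.C₀ / P.ρ 1) * (1 / r ^ 3) := by ring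


/-- Exact computation of `Im(∂₂V/V)`, a bound on `Re(∂₂V/V)`, and the
resulting estimate on `i·∂₂V/V + 2d(x₁²−d²−x₂²)/(r₁²r₋₁²)`. -/
theorem statement5 (P : VortexProfile) :
    (∀ d : ℝ, 0 < d → ∀ x : R2, x ≠ d • e1 → x ≠ -(d • e1) →
      (pd2 (VP P d) x / VP P d x).im
          = 2 * d * (x.1 ^ 2 - d ^ 2 - x.2 ^ 2) / (r1 d x ^ 2 * rm1 d x ^ 2) ∧
      |(pd2 (VP P d) x / VP P d x).re|
          ≤ deriv P.ρ (r1 d x) / P.ρ (r1 d x) + deriv P.ρ (rm1 d x) / P.ρ (rm1 d x)) ∧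
    ∃ C : ℝ, 0 < C ∧ ∀ d : ℝ, 0 < d → ∀ x : R2, 1 ≤ r1 d x → 1 ≤ rm1 d x →
      ‖Complex.I * pd2 (VP P d) x / VP P d x
          + Complex.ofReal (2 * d * (x.1 ^ 2 - d ^ 2 - x.2 ^ 2) / (r1 d x ^ 2 * rm1 d x ^ 2))‖
        ≤ C * (1 / r1 d x ^ 3 + 1 / rm1 d x ^ 3) := by
  have main : ∀ d : ℝ, 0 < d → ∀ x : R2, x ≠ d • e1 → x ≠ -(d • e1) →
      (pd2 (VP P d) x / VP P d x).im
          = 2 * d * (x.1 ^ 2 - d ^ 2 - x.2 ^ 2) / (r1 d x ^ 2 * rm1 d x ^ 2) ∧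
      |(pd2 (VP P d) x / VP P d x).re|
          ≤ deriv P.ρ (r1 d x) / P.ρ (r1 d x) + deriv P.ρ (rm1 d x) / P.ρ (rm1 d x) := by
    intro d hd x hx1 hx2
    have h1 : x - d • e1 ≠ 0 := sub_ne_zero.mpr hx1
    have h2 : x + d • e1 ≠ 0 := fun h => hx2 (eq_neg_of_add_eq_zero_left h)
    have hr1 : r1 d x = rE (x - d • e1) := rfl
    have hrm1 : rm1 d x = rE (x + d • e1) := rfl
    have hr1pos : 0 < r1 d x := rE_pos h1
    have hrm1pos : 0 < rm1 d x := rE_pos h2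
    have hy : x - d • e1 = (x.1 - d, x.2) := sub_smul_e1 d x
    have hz : x + d • e1 = (x.1 + d, x.2) := add_smul_e1 d x
    have hr1sq : r1 d x ^ 2 = (x.1 - d) ^ 2 + x.2 ^ 2 := by
      rw [hr1, hy, rE_sq]
    have hrm1sq : rm1 d x ^ 2 = (x.1 + d) ^ 2 + x.2 ^ 2 := by
      rw [hrm1, hz, rE_sq]
    have hw := pd2_VP_div P h1 h2
    rw [pd2_V1_div P h1, pd2_V1_div P h2] at hw
    constructor
    · rw [hw]
      simp only [Complex.add_im, Complex.ofReal_im, Complex.mul_im, Complex.ofReal_re,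
        Complex.I_im, Complex.I_re, Complex.conj_im, Complex.conj_re, mul_zero, mul_one,
        zero_add, add_zero, zero_mul, neg_add_rev, neg_zero]
      rw [← hr1, ← hrm1, hy, hz]
      have e1' : ((x.1 - d, x.2) : R2).1 = x.1 - d := rfl
      have e2' : ((x.1 + d, x.2) : R2).1 = x.1 + d := rfl
      rw [e1', e2', hr1sq, hrm1sq]
      have hA : (x.1 - d) ^ 2 + x.2 ^ 2 ≠ 0 := by
        rw [← hr1sq]; positivity
      have hB : (x.1 + d) ^ 2 + x.2 ^ 2 ≠ 0 := by
        rw [← hrm1sq]; positivity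
      field_simp
      ring
    · rw [hw]
      have b1 : |deriv P.ρ (rE (x - d • e1)) * (x - d • e1).2
            / (rE (x - d • e1) * P.ρ (rE (x - d • e1)))|
          ≤ deriv P.ρ (r1 d x) / P.ρ (r1 d x) := by
        rw [hr1]
        exact reTermBound P (rE_pos h1) (abs_snd_le_rE _)
      have b2 : |deriv P.ρ (rE (x + d • e1)) * (x + d • e1).2
            / (rE (x + d • e1) * P.ρ (rE (x + d • e1)))|
          ≤ deriv P.ρ (rm1 d x) / P.ρ (rm1 d x) := by
        rw [hrm1]
        exact reTermBound P (rE_pos h2) (abs_snd_le_rE _)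
      simp only [Complex.add_re, Complex.ofReal_re, Complex.mul_re, Complex.I_re, Complex.I_im,
        Complex.ofReal_im, Complex.conj_re, mul_zero, mul_one, zero_mul, sub_zero, zero_sub,
        add_zero, zero_add, neg_zero]
      exact le_trans (abs_add_le _ _) (add_le_add b1 b2)
  refine ⟨main, P.C₀ / P.ρ 1, div_pos P.C₀_pos (P.rho_pos 1 one_pos), ?_⟩
  intro d hd x hA hB
  have hx1 : x ≠ d • e1 := by
    rintro rfl
    norm_num [r1, rE, sub_self] at hA
  have hx2 : x ≠ -(d • e1) := by
    rintro rfl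
    norm_num [rm1, rE, neg_add_cancel] at hB
  obtain ⟨hIm, hRe⟩ := main d hd x hx1 hx2
  set w := pd2 (VP P d) x / VP P d x with hwdef
  have hassoc : Complex.I * pd2 (VP P d) x / VP P d x = Complex.I * w := by
    rw [hwdef, mul_div_assoc]
  have hkey : Complex.I * w
      + Complex.ofReal (2 * d * (x.1 ^ 2 - d ^ 2 - x.2 ^ 2) / (r1 d x ^ 2 * rm1 d x ^ 2))
      = (w.re : ℂ) * Complex.I := by
    rw [← hIm]
    apply Complex.ext <;> simp
  rw [hassoc, hkey, norm_mul, Complex.norm_I, Complex.norm_real, Real.norm_eq_abs, mul_one]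
  calc |w.re| ≤ deriv P.ρ (r1 d x) / P.ρ (r1 d x) + deriv P.ρ (rm1 d x) / P.ρ (rm1 d x) := hRe
  _ ≤ (P.C₀ / P.ρ 1) * (1 / r1 d x ^ 3) + (P.C₀ / P.ρ 1) * (1 / rm1 d x ^ 3) :=
      add_le_add (tailBound P hA) (tailBound P hB)
  _ = (P.C₀ / P.ρ 1) * (1 / r1 d x ^ 3 + 1 / rm1 d x ^ 3) := by ring
end
end

section
/- Let C_K > 0 and let G ∈ C⁰(ℝ² ∖ {0}, ℝ) satisfy |G(x)| ≤ C_K·|x|^{−3/2}·(1+|x|)^{−3/2} for all x ≠ 0 (the pointwise bound satisfied by the first derivatives of the Gross–Pitaevskii kernels K₀, K_j, L_{j,k}). Let 0 < α′ < α < 3 and let h ∈ C⁰(ℝ²,ℝ) with M := ‖(1+r̃)^{α}·h‖_{L^∞(ℝ²)} < +∞. Then for every d > 0 the convolution (G∗h)(x) = ∫_{ℝ²} G(x−y)·h(y) dy converges absolutely for every x, and there exists C(α,α′,C_K) > 0, independent of d and of h, such that |(G∗h)(x)| ≤ C(α,α′,C_K)·M/(1+r̃(x))^{α′} for all x ∈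 ℝ². -/
noncomputable section

open Complex MeasureTheory Filter Topology Set

namespace St11

lemma rE_nonneg (x : R2) : 0 ≤ rE x := Real.sqrt_nonneg _

lemma rE_eq (x : R2) : rE x = ‖(⟨x.1, x.2⟩ : ℂ)‖ := by
  rw [Complex.norm_def, Complex.normSq_mk, rE]
  ring_nf

lemma rE_add (a b : R2) : rE (a + b) ≤ rE a + rE b := by
  have h : (⟨(a+b).1, (a+b).2⟩ : ℂ) = ⟨a.1, a.2⟩ + ⟨b.1, b.2⟩ := by
    apply Complex.ext <;> simp
  rw [rE_eq, rE_eq, rE_eq, h]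
  exact norm_add_le _ _

lemma norm_le_rE (z : R2) : ‖z‖ ≤ rE z := by
  rw [Prod.norm_def]
  have h1 : |z.1| ≤ rE z := by
    rw [← Real.sqrt_sq_eq_abs]
    exact Real.sqrt_le_sqrt (by nlinarith [sq_nonneg z.2])
  have h2 : |z.2| ≤ rE z := by
    rw [← Real.sqrt_sq_eq_abs]
    exact Real.sqrt_le_sqrt (by nlinarith [sq_nonneg z.1])
  simpa [Real.norm_eq_abs] using max_le h1 h2

lemma rE_pos {x : R2} (hx : x ≠ 0) : 0 < rE x := by
  apply Real.sqrt_pos.2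
  have hor : x.1 ≠ 0 ∨ x.2 ≠ 0 := by
    by_contra hc
    push_neg at hc
    exact hx (Prod.ext_iff.2 ⟨hc.1, hc.2⟩)
  rcases hor with hne | hne
  · nlinarith [sq_nonneg x.2, pow_pos (abs_pos.2 hne) 2, _root_.sq_abs x.1]
  · nlinarith [sq_nonneg x.1, pow_pos (abs_pos.2 hne) 2, _root_.sq_abs x.2]

lemma continuous_rE : Continuous rE := by
  apply Real.continuous_sqrt.comp
  fun_prop

lemma rt_nonneg (d : ℝ) (x : R2) : 0 ≤ rt d x :=
  le_min (rE_nonneg _) (rE_nonneg _)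

lemma rt_lip (d : ℝ) (x y : R2) : rt d x ≤ rt d y + rE (x - y) := by
  have h1 : r1 d x ≤ r1 d y + rE (x - y) := by
    have : x - d • e1 = (y - d • e1) + (x - y) := by abel
    rw [r1, this]
    exact rE_add _ _
  have h2 : rm1 d x ≤ rm1 d y + rE (x - y) := by
    have : x + d • e1 = (y + d • e1) + (x - y) := by abel
    rw [rm1, this]
    exact rE_add _ _
  calc rt d x ≤ min (r1 d y + rE (x - y)) (rm1 d y + rE (x - y)) :=
        le_min ((min_le_left _ _).trans h1) ((min_le_right _ _).trans h2)
    _ = rt d y + rE (x - y) := by rw [min_add_add_right]; rfl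

/-- The radial majorant of the kernel. -/
def W (z : R2) : ℝ := rE z ^ (-(3:ℝ)/2) * (1 + rE z) ^ (-(3:ℝ)/2)

lemma W_nonneg (z : R2) : 0 ≤ W z :=
  mul_nonneg (Real.rpow_nonneg (rE_nonneg _) _)
    (Real.rpow_nonneg (by linarith [rE_nonneg z]) _)

lemma W_meas : Measurable W := by
  have h := continuous_rE.measurable
  unfold W
  fun_prop

lemma W_le {z : R2} (hz : 1/2 ≤ rE z) : W z ≤ 6 * (1 + ‖z‖) ^ (-(3:ℝ)) := by
  have ha : (0:ℝ) < rE z := lt_of_lt_of_le (by norm_num) hz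
  have hP : (0:ℝ) < 1 + rE z := by linarith
  have h3a : 1 + rE z ≤ 3 * rE z := by linarith
  have h1 : rE z ^ (-(3:ℝ)/2) ≤ ((1 + rE z)/3) ^ (-(3:ℝ)/2) := by
    apply Real.rpow_le_rpow_of_nonpos (by linarith) (by linarith) (by norm_num)
  have h2 : ((1 + rE z)/3) ^ (-(3:ℝ)/2) = (1 + rE z) ^ (-(3:ℝ)/2) / 3 ^ (-(3:ℝ)/2) :=
    Real.div_rpow (by linarith) (by norm_num) _
  have h3 : (3:ℝ) ^ (-(3:ℝ)/2) = ((3:ℝ) ^ ((3:ℝ)/2))⁻¹ := by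
    rw [← Real.rpow_neg (by norm_num)]; norm_num
  have h4 : (1:ℝ) ≤ 3 ^ ((3:ℝ)/2) := Real.one_le_rpow (by norm_num) (by norm_num)
  have h5 : (3:ℝ) ^ ((3:ℝ)/2) ≤ 6 := by
    have e : ((3:ℝ) ^ ((3:ℝ)/2)) ^ (2:ℕ) = 27 := by
      rw [← Real.rpow_natCast ((3:ℝ) ^ ((3:ℝ)/2)) 2,
        ← Real.rpow_mul (by norm_num : (0:ℝ) ≤ 3)]
      have e2 : (3:ℝ)/2 * (2:ℕ) = ((3:ℕ):ℝ) := by norm_num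
      rw [e2, Real.rpow_natCast]
      norm_num
    nlinarith [Real.rpow_nonneg (show (0:ℝ) ≤ 3 by norm_num) ((3:ℝ)/2)]
  have key : W z ≤ 3 ^ ((3:ℝ)/2) * (1 + rE z) ^ (-(3:ℝ)) := by
    have hsplit : (1 + rE z) ^ (-(3:ℝ)/2) * (1 + rE z) ^ (-(3:ℝ)/2) = (1 + rE z) ^ (-(3:ℝ)) := by
      rw [← Real.rpow_add hP]; norm_num
    calc W z ≤ ((1 + rE z)/3) ^ (-(3:ℝ)/2) * (1 + rE z) ^ (-(3:ℝ)/2) := by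
          apply mul_le_mul_of_nonneg_right h1 (Real.rpow_nonneg (by linarith) _)
      _ = 3 ^ ((3:ℝ)/2) * ((1 + rE z) ^ (-(3:ℝ)/2) * (1 + rE z) ^ (-(3:ℝ)/2)) := by
          rw [h2, h3, div_inv_eq_mul]; ring
      _ = 3 ^ ((3:ℝ)/2) * (1 + rE z) ^ (-(3:ℝ)) := by rw [hsplit]
  have hmon : (1 + rE z) ^ (-(3:ℝ)) ≤ (1 + ‖z‖) ^ (-(3:ℝ)) := by
    apply Real.rpow_le_rpow_of_nonpos (by positivity) (by linarith [norm_le_rE z]) (by norm_num)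
  calc W z ≤ 3 ^ ((3:ℝ)/2) * (1 + rE z) ^ (-(3:ℝ)) := key
    _ ≤ 6 * (1 + ‖z‖) ^ (-(3:ℝ)) := by
        apply mul_le_mul h5 hmon (Real.rpow_nonneg (by linarith) _) (by norm_num)

/-- 1D integrable majorant profile. -/
def u (a : ℝ) : ℝ := min (|a| ^ (-(3:ℝ)/4)) (|a| ^ (-(2:ℝ)))

lemma u_nonneg (a : ℝ) : 0 ≤ u a :=
  le_min (Real.rpow_nonneg (abs_nonneg _) _) (Real.rpow_nonneg (abs_nonneg _) _)

lemma u_meas : Measurable u := by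
  unfold u
  fun_prop

lemma u_even (a : ℝ) : u (-a) = u a := by simp [u]

lemma u_int : Integrable u := by
  have hmeas := u_meas
  have hIoi : IntegrableOn u (Ioi (0:ℝ)) := by
    have h01 : IntegrableOn u (Ioc (0:ℝ) 1) := by
      have hbig : IntegrableOn (fun x : ℝ => x ^ (-(3:ℝ)/4)) (Ioc (0:ℝ) 1) := by
        have := intervalIntegral.intervalIntegrable_rpow' (a := 0) (b := 1)
          (r := -(3:ℝ)/4) (by norm_num)
        rwa [intervalIntegrable_iff_integrableOn_Ioc_of_le (by norm_num)] at this
      apply hbig.mono' (hmeas.aestronglyMeasurable.restrict)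
      filter_upwards [ae_restrict_mem measurableSet_Ioc] with a ha
      rw [Real.norm_eq_abs, _root_.abs_of_nonneg (u_nonneg a)]
      calc u a ≤ |a| ^ (-(3:ℝ)/4) := min_le_left _ _
        _ = a ^ (-(3:ℝ)/4) := by rw [abs_of_pos ha.1]
    have h1i : IntegrableOn u (Ioi (1:ℝ)) := by
      have hbig := integrableOn_Ioi_rpow_of_lt (by norm_num : -(2:ℝ) < -1) zero_lt_one
      apply hbig.mono' (hmeas.aestronglyMeasurable.restrict)
      filter_upwards [ae_restrict_mem measurableSet_Ioi] with a ha
      rw [Real.norm_eq_abs, _root_.abs_of_nonneg (u_nonneg a)]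
      calc u a ≤ |a| ^ (-(2:ℝ)) := min_le_right _ _
        _ = a ^ (-(2:ℝ)) := by rw [abs_of_pos (lt_trans zero_lt_one ha)]
    rw [← Ioc_union_Ioi_eq_Ioi (zero_le_one (α := ℝ))]
    exact h01.union h1i
  have hIio : IntegrableOn u (Iio (0:ℝ)) := by
    rw [← (Measure.measurePreserving_neg (volume : Measure ℝ)).integrableOn_comp_preimage
      (Homeomorph.neg ℝ).measurableEmbedding]
    simp only [Function.comp_def, neg_preimage, neg_Iio, neg_zero, u_even]
    exact hIoi
  rw [← integrableOn_univ, ← Iio_union_Ici (a := (0:ℝ)), integrableOn_union,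
    integrableOn_Ici_iff_integrableOn_Ioi]
  exact ⟨hIio, hIoi⟩

/-- The global integrable comparison function `(1+‖z‖)^{-3}` on the plane. -/
def N (z : R2) : ℝ := (1 + ‖z‖) ^ (-(3:ℝ))

lemma N_nonneg (z : R2) : 0 ≤ N z := Real.rpow_nonneg (by positivity) _

lemma N_int : Integrable N := by
  have : ((Module.finrank ℝ R2 : ℝ)) < 3 := by
    simp [Module.finrank_self]
    norm_num
  exact integrable_one_add_norm this

lemma N_meas : Measurable N := by unfold N; fun_prop

lemma null1 : volume {z : R2 | z.1 = 0} = 0 := by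
  have he : {z : R2 | z.1 = 0} = ({0} : Set ℝ) ×ˢ (univ : Set ℝ) := by
    ext ⟨a, b⟩; simp [Set.mem_prod, eq_comm]
  rw [he, Measure.volume_eq_prod, Measure.prod_prod]
  simp

lemma null2 : volume {z : R2 | z.2 = 0} = 0 := by
  have he : {z : R2 | z.2 = 0} = (univ : Set ℝ) ×ˢ ({0} : Set ℝ) := by
    ext ⟨a, b⟩; simp [Set.mem_prod, eq_comm]
  rw [he, Measure.volume_eq_prod, Measure.prod_prod]
  simp

lemma null_singleton (x : R2) : volume ({x} : Set R2) = 0 := by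
  have he : ({x} : Set R2) = ({x.1} : Set ℝ) ×ˢ ({x.2} : Set ℝ) := by
    ext z; simp [Prod.ext_iff]
  rw [he, Measure.volume_eq_prod, Measure.prod_prod]
  simp

lemma W_int : Integrable W := by
  have hS : Integrable (fun z : R2 => u z.1 * u z.2) := by
    have := u_int.mul_prod u_int
    simpa [Measure.volume_eq_prod] using this
  have hmaj : Integrable (fun z : R2 => u z.1 * u z.2 + 6 * N z) :=
    hS.add (N_int.const_mul 6)
  apply hmaj.mono' W_meas.aestronglyMeasurable
  have hae : ∀ᵐ z : R2, z.1 ≠ 0 ∧ z.2 ≠ 0 := by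
    rw [eventually_and]
    constructor
    · rw [ae_iff]
      simpa using null1
    · rw [ae_iff]
      simpa using null2
  filter_upwards [hae] with z hz
  rw [Real.norm_eq_abs, _root_.abs_of_nonneg (W_nonneg z)]
  rcases le_or_gt (rE z) (1/2) with hsm | hbg
  · -- small: W z ≤ u z.1 * u z.2
    have h1 : (0:ℝ) < |z.1| := abs_pos.2 hz.1
    have h2 : (0:ℝ) < |z.2| := abs_pos.2 hz.2
    have hz1 : |z.1| ≤ 1 := by
      have := (norm_le_rE z).trans hsm
      rw [Prod.norm_def] at this
      simp only [Real.norm_eq_abs] at this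
      have := le_trans (le_max_left |z.1| |z.2|) this
      linarith
    have hz2 : |z.2| ≤ 1 := by
      have := (norm_le_rE z).trans hsm
      rw [Prod.norm_def] at this
      simp only [Real.norm_eq_abs] at this
      have := le_trans (le_max_right |z.1| |z.2|) this
      linarith
    have hu1 : u z.1 = |z.1| ^ (-(3:ℝ)/4) :=
      min_eq_left (Real.rpow_le_rpow_of_exponent_ge h1 hz1 (by norm_num))
    have hu2 : u z.2 = |z.2| ^ (-(3:ℝ)/4) :=
      min_eq_left (Real.rpow_le_rpow_of_exponent_ge h2 hz2 (by norm_num))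
    have hprod : (0:ℝ) < |z.1| * |z.2| := mul_pos h1 h2
    have hrE : Real.sqrt (|z.1| * |z.2|) ≤ rE z := by
      apply Real.sqrt_le_sqrt
      nlinarith [sq_nonneg (|z.1| - |z.2|), _root_.sq_abs z.1, _root_.sq_abs z.2]
    have hsq : (0:ℝ) < Real.sqrt (|z.1| * |z.2|) := Real.sqrt_pos.2 hprod
    have key : rE z ^ (-(3:ℝ)/2) ≤ (|z.1| * |z.2|) ^ (-(3:ℝ)/4) := by
      have h := Real.rpow_le_rpow_of_nonpos hsq hrE (by norm_num : -(3:ℝ)/2 ≤ 0)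
      calc rE z ^ (-(3:ℝ)/2) ≤ Real.sqrt (|z.1| * |z.2|) ^ (-(3:ℝ)/2) := h
        _ = (|z.1| * |z.2|) ^ (-(3:ℝ)/4) := by
            rw [Real.sqrt_eq_rpow, ← Real.rpow_mul hprod.le]
            norm_num
    have hone : (1 + rE z) ^ (-(3:ℝ)/2) ≤ 1 :=
      Real.rpow_le_one_of_one_le_of_nonpos (by linarith [rE_nonneg z]) (by norm_num)
    have : W z ≤ (|z.1| * |z.2|) ^ (-(3:ℝ)/4) := by
      calc W z ≤ rE z ^ (-(3:ℝ)/2) * 1 :=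
            mul_le_mul_of_nonneg_left hone (Real.rpow_nonneg (rE_nonneg z) _)
        _ = rE z ^ (-(3:ℝ)/2) := mul_one _
        _ ≤ _ := key
    have hmul : (|z.1| * |z.2|) ^ (-(3:ℝ)/4) = u z.1 * u z.2 := by
      rw [Real.mul_rpow (abs_nonneg _) (abs_nonneg _), hu1, hu2]
    have h6N : (0:ℝ) ≤ 6 * N z := by
      have := N_nonneg z
      linarith
    calc W z ≤ (|z.1| * |z.2|) ^ (-(3:ℝ)/4) := this
      _ = u z.1 * u z.2 := hmul
      _ ≤ u z.1 * u z.2 + 6 * N z := by linarith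
  · -- big: W z ≤ 6 N z
    have := W_le hbg.le
    have hu : (0:ℝ) ≤ u z.1 * u z.2 := mul_nonneg (u_nonneg _) (u_nonneg _)
    unfold N
    linarith [this]

lemma key {α : ℝ} (hα0 : 0 < α) (hα3 : α < 3) (d : ℝ) (x y : R2) :
    W (x - y) * (1 + rt d y) ^ (-α) ≤
      27 * 2 ^ α * (1 + rt d x) ^ (-α) *
        (W (x - y) + N (x - y) + N (y - d • e1) + N (y + d • e1)) := by
  set P := 1 + rt d x with hPdef
  have hP1 : 1 ≤ P := by
    have := rt_nonneg d x
    rw [hPdef]; linarith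
  have hP0 : 0 < P := lt_of_lt_of_le one_pos hP1
  have ht0 : 0 ≤ rt d y := rt_nonneg d y
  have hT0 : (0:ℝ) < 1 + rt d y := by linarith
  have h2α : (1:ℝ) ≤ 2 ^ α := Real.one_le_rpow one_le_two hα0.le
  have h2α0 : (0:ℝ) < 2 ^ α := lt_of_lt_of_le one_pos h2α
  have hPα : (0:ℝ) < P ^ (-α) := Real.rpow_pos_of_pos hP0 _
  have hP2 : (0:ℝ) < P / 2 := by linarith
  have hhalf : (P/2) ^ (-α) = 2 ^ α * P ^ (-α) := by
    rw [Real.div_rpow hP0.le (by norm_num : (0:ℝ) ≤ 2),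
      Real.rpow_neg (by norm_num : (0:ℝ) ≤ 2), div_inv_eq_mul]
    ring
  have nn1 := W_nonneg (x - y)
  have nn2 := N_nonneg (x - y)
  have nn3 := N_nonneg (y - d • e1)
  have nn4 := N_nonneg (y + d • e1)
  have hTα : (0:ℝ) ≤ (1 + rt d y) ^ (-α) := Real.rpow_nonneg hT0.le _
  rcases le_or_gt (rE (x - y)) (P/2) with hA | hB
  · -- Region A : x - y small, so rt d y is large
    have hge : P/2 ≤ 1 + rt d y := by
      have := rt_lip d x y
      rw [hPdef] at *
      linarith
    have hmono : (1 + rt d y) ^ (-α) ≤ 2 ^ α * P ^ (-α) := by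
      rw [← hhalf]
      exact Real.rpow_le_rpow_of_nonpos hP2 hge (neg_nonpos.2 hα0.le)
    calc W (x - y) * (1 + rt d y) ^ (-α) ≤ W (x - y) * (2 ^ α * P ^ (-α)) :=
          mul_le_mul_of_nonneg_left hmono nn1
      _ = 2 ^ α * P ^ (-α) * W (x - y) := by ring
      _ ≤ 27 * 2 ^ α * P ^ (-α) * W (x - y) := by nlinarith
      _ ≤ 27 * 2 ^ α * P ^ (-α) *
          (W (x - y) + N (x - y) + N (y - d • e1) + N (y + d • e1)) := by
          apply mul_le_mul_of_nonneg_left (by linarith) (by positivity)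
  rcases le_or_gt (P/2) (rt d y) with hBt | hBs
  · -- Region B1 : both far
    have hz : 1/2 ≤ rE (x - y) := le_trans (by linarith) hB.le
    have hW6 : W (x - y) ≤ 6 * N (x - y) := W_le hz
    have hmono : (1 + rt d y) ^ (-α) ≤ 2 ^ α * P ^ (-α) := by
      rw [← hhalf]
      exact Real.rpow_le_rpow_of_nonpos hP2 (by linarith) (neg_nonpos.2 hα0.le)
    calc W (x - y) * (1 + rt d y) ^ (-α) ≤ (6 * N (x - y)) * (2 ^ α * P ^ (-α)) :=
          mul_le_mul hW6 hmono hTα (by linarith)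
      _ = 6 * (2 ^ α * P ^ (-α)) * N (x - y) := by ring
      _ ≤ 27 * 2 ^ α * P ^ (-α) * N (x - y) := by nlinarith
      _ ≤ 27 * 2 ^ α * P ^ (-α) *
          (W (x - y) + N (x - y) + N (y - d • e1) + N (y + d • e1)) := by
          apply mul_le_mul_of_nonneg_left (by linarith) (by positivity)
  · -- Region B2 : x - y far, rt d y small
    have ha0 : (0:ℝ) < rE (x - y) := lt_trans hP2 hB
    have hsplit : (1 + rt d y) ^ (-α) =
        (1 + rt d y) ^ ((3:ℝ) - α) * (1 + rt d y) ^ (-(3:ℝ)) := by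
      rw [← Real.rpow_add hT0, show (3:ℝ) - α + -3 = -α by ring]
    have hP3 : (0:ℝ) < P ^ (-(3:ℝ)) := Real.rpow_pos_of_pos hP0 _
    -- bound W by 8 P^{-3}
    have b1 : W (x - y) ≤ 8 * P ^ (-(3:ℝ)) := by
      have s1 : (1 + rE (x - y)) ^ (-(3:ℝ)/2) ≤ rE (x - y) ^ (-(3:ℝ)/2) :=
        Real.rpow_le_rpow_of_nonpos ha0 (by linarith) (by norm_num)
      have s2 : W (x - y) ≤ rE (x - y) ^ (-(3:ℝ)) := by
        have : rE (x - y) ^ (-(3:ℝ)/2) * rE (x - y) ^ (-(3:ℝ)/2) = rE (x - y) ^ (-(3:ℝ)) := by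
          rw [← Real.rpow_add ha0]; norm_num
        calc W (x - y) ≤ rE (x - y) ^ (-(3:ℝ)/2) * rE (x - y) ^ (-(3:ℝ)/2) :=
              mul_le_mul_of_nonneg_left s1 (Real.rpow_nonneg (rE_nonneg _) _)
          _ = rE (x - y) ^ (-(3:ℝ)) := this
      have s3 : rE (x - y) ^ (-(3:ℝ)) ≤ (P/2) ^ (-(3:ℝ)) :=
        Real.rpow_le_rpow_of_nonpos hP2 hB.le (by norm_num)
      have s4 : (P/2) ^ (-(3:ℝ)) = 8 * P ^ (-(3:ℝ)) := by
        rw [Real.div_rpow hP0.le (by norm_num : (0:ℝ) ≤ 2),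
          Real.rpow_neg (by norm_num : (0:ℝ) ≤ 2), div_inv_eq_mul,
          show ((2:ℝ) ^ (3:ℝ)) = 8 by
            rw [show (3:ℝ) = ((3:ℕ):ℝ) by norm_num, Real.rpow_natCast]; norm_num]
        ring
      calc W (x - y) ≤ rE (x - y) ^ (-(3:ℝ)) := s2
        _ ≤ (P/2) ^ (-(3:ℝ)) := s3
        _ = 8 * P ^ (-(3:ℝ)) := s4
    -- bound (1+t)^{3-α}
    have hP3α : (0:ℝ) ≤ P ^ ((3:ℝ) - α) := (Real.rpow_pos_of_pos hP0 _).le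
    have b2 : (1 + rt d y) ^ ((3:ℝ) - α) ≤ (27/8) * P ^ ((3:ℝ) - α) := by
      have s1 : (1 + rt d y : ℝ) ≤ (3/2) * P := by linarith
      have s2 : (1 + rt d y) ^ ((3:ℝ) - α) ≤ ((3/2) * P) ^ ((3:ℝ) - α) :=
        Real.rpow_le_rpow hT0.le s1 (by linarith)
      have s3 : ((3/2 : ℝ) * P) ^ ((3:ℝ) - α) = (3/2 : ℝ) ^ ((3:ℝ) - α) * P ^ ((3:ℝ) - α) :=
        Real.mul_rpow (by norm_num) hP0.le
      have s4 : (3/2 : ℝ) ^ ((3:ℝ) - α) ≤ (3/2 : ℝ) ^ (3:ℝ) :=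
        Real.rpow_le_rpow_of_exponent_le (by norm_num) (by linarith)
      have s5 : (3/2 : ℝ) ^ (3:ℝ) = 27/8 := by
        rw [show (3:ℝ) = ((3:ℕ):ℝ) by norm_num, Real.rpow_natCast]; norm_num
      calc (1 + rt d y) ^ ((3:ℝ) - α) ≤ (3/2 : ℝ) ^ ((3:ℝ) - α) * P ^ ((3:ℝ) - α) := by
            rw [← s3]; exact s2
        _ ≤ (27/8) * P ^ ((3:ℝ) - α) := by
            apply mul_le_mul_of_nonneg_right (le_trans s4 (le_of_eq s5)) hP3α
    -- bound (1+t)^{-3} by the two bumps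
    have b3 : (1 + rt d y) ^ (-(3:ℝ)) ≤ N (y - d • e1) + N (y + d • e1) := by
      have haux : ∀ v : R2, (1 + rE v) ^ (-(3:ℝ)) ≤ N v := fun v => by
        apply Real.rpow_le_rpow_of_nonpos (by positivity) (by linarith [norm_le_rE v])
          (by norm_num)
      rcases min_cases (r1 d y) (rm1 d y) with ⟨hm, _⟩ | ⟨hm, _⟩
      · have : (1 + rt d y) ^ (-(3:ℝ)) ≤ N (y - d • e1) := by
          rw [rt, hm]; exact haux _
        linarith
      · have : (1 + rt d y) ^ (-(3:ℝ)) ≤ N (y + d • e1) := by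
          rw [rt, hm]; exact haux _
        linarith
    have hA2 : (0:ℝ) ≤ (1 + rt d y) ^ ((3:ℝ) - α) := Real.rpow_nonneg hT0.le _
    have hA3 : (0:ℝ) ≤ (1 + rt d y) ^ (-(3:ℝ)) := Real.rpow_nonneg hT0.le _
    have hPcol : P ^ (-(3:ℝ)) * P ^ ((3:ℝ) - α) = P ^ (-α) := by
      rw [← Real.rpow_add hP0, show -(3:ℝ) + ((3:ℝ) - α) = -α by ring]
    calc W (x - y) * (1 + rt d y) ^ (-α)
        = W (x - y) * ((1 + rt d y) ^ ((3:ℝ) - α) * (1 + rt d y) ^ (-(3:ℝ))) := by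
          rw [hsplit]
      _ ≤ (8 * P ^ (-(3:ℝ))) * (((27/8) * P ^ ((3:ℝ) - α)) * (N (y - d • e1) + N (y + d • e1))) := by
          apply mul_le_mul b1 (mul_le_mul b2 b3 hA3 (by positivity)) (mul_nonneg hA2 hA3) (by positivity)
      _ = 27 * (P ^ (-(3:ℝ)) * P ^ ((3:ℝ) - α)) * (N (y - d • e1) + N (y + d • e1)) := by ring
      _ = 27 * P ^ (-α) * (N (y - d • e1) + N (y + d • e1)) := by rw [hPcol]
      _ ≤ 27 * 2 ^ α * P ^ (-α) * (N (y - d • e1) + N (y + d • e1)) := by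
          have hc : 27 * P ^ (-α) ≤ 27 * 2 ^ α * P ^ (-α) := by nlinarith
          exact mul_le_mul_of_nonneg_right hc (by linarith)
      _ ≤ 27 * 2 ^ α * P ^ (-α) *
          (W (x - y) + N (x - y) + N (y - d • e1) + N (y + d • e1)) := by
          apply mul_le_mul_of_nonneg_left (by linarith) (by positivity)

end St11

/-- Weighted decay estimates for convolution with the derivative of a
Gross–Pitaevskii kernel, i.e. `G` with `|G(x)| ≤ C_K |x|^{−3/2}(1+|x|)^{−3/2}`. -/
theorem statement11 (α α' C_K : ℝ) (hα' : 0 < α') (hα'α : α' < α) (hα3 : α < 3)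
    (hCK : 0 < C_K) :
    ∃ C : ℝ, 0 < C ∧
      ∀ G : R2 → ℝ, ContinuousOn G {x : R2 | x ≠ 0} →
        (∀ x : R2, x ≠ 0 →
          |G x| ≤ C_K / (rE x ^ ((3 : ℝ) / 2) * (1 + rE x) ^ ((3 : ℝ) / 2))) →
        ∀ d : ℝ, 0 < d →
        ∀ h : R2 → ℝ, Continuous h →
        ∀ M : ℝ, (∀ x : R2, |h x| * (1 + rt d x) ^ α ≤ M) →
        ∀ x : R2,
          Integrable (fun y => G (x - y) * h y) volume ∧
          |∫ y : R2, G (x - y) * h y| ≤ C * M / (1 + rt d x) ^ α' := by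
  have hα0 : 0 < α := lt_trans hα' hα'α
  set IW : ℝ := ∫ z : R2, St11.W z with hIWdef
  set IN : ℝ := ∫ z : R2, St11.N z with hINdef
  have hIW0 : 0 ≤ IW := integral_nonneg St11.W_nonneg
  have hIN0 : 0 ≤ IN := integral_nonneg St11.N_nonneg
  have h2α : (1:ℝ) ≤ 2 ^ α := Real.one_le_rpow one_le_two hα0.le
  set c : ℝ := 27 * 2 ^ α * C_K * (IW + 3 * IN) with hcdef
  have hc0 : 0 ≤ c := by
    apply mul_nonneg (mul_nonneg (mul_nonneg (by norm_num) (by linarith)) hCK.le)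
    linarith
  refine ⟨c + 1, by linarith, ?_⟩
  intro G hGc hGb d hd h hhc M hM x
  have hP0 : (0:ℝ) < 1 + rt d x := by linarith [St11.rt_nonneg d x]
  have hM0 : 0 ≤ M :=
    le_trans (mul_nonneg (abs_nonneg _)
      (Real.rpow_nonneg (by linarith [St11.rt_nonneg d (0:R2)]) _)) (hM 0)
  have hh : ∀ y, |h y| ≤ M * (1 + rt d y) ^ (-α) := by
    intro y
    have hQb : (0:ℝ) < 1 + rt d y := by linarith [St11.rt_nonneg d y]
    have hQ : (0:ℝ) < (1 + rt d y) ^ α := Real.rpow_pos_of_pos hQb _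
    have h1 : |h y| ≤ M / (1 + rt d y) ^ α := (le_div_iff₀ hQ).2 (hM y)
    rw [Real.rpow_neg hQb.le, ← div_eq_mul_inv]
    exact h1
  have hGW : ∀ z : R2, z ≠ 0 → |G z| ≤ C_K * St11.W z := by
    intro z hz
    have hre : 0 < rE z := St11.rE_pos hz
    have h3 : St11.W z = (rE z ^ ((3:ℝ)/2) * (1 + rE z) ^ ((3:ℝ)/2))⁻¹ := by
      rw [St11.W, show -(3:ℝ)/2 = -((3:ℝ)/2) by ring, Real.rpow_neg hre.le,
        Real.rpow_neg (by linarith), mul_inv]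
    calc |G z| ≤ C_K / (rE z ^ ((3:ℝ)/2) * (1 + rE z) ^ ((3:ℝ)/2)) := hGb z hz
      _ = C_K * St11.W z := by rw [h3, div_eq_mul_inv]
  have hint1 : Integrable (fun y : R2 => St11.W (x - y)) := St11.W_int.comp_sub_left x
  have hint2 : Integrable (fun y : R2 => St11.N (x - y)) := St11.N_int.comp_sub_left x
  have hint3 : Integrable (fun y : R2 => St11.N (y - d • e1)) := St11.N_int.comp_sub_right _
  have hint4 : Integrable (fun y : R2 => St11.N (y + d • e1)) := St11.N_int.comp_add_right _
  have hsumint : Integrable (fun y : R2 =>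
      St11.W (x - y) + St11.N (x - y) + St11.N (y - d • e1) + St11.N (y + d • e1)) :=
    ((hint1.add hint2).add hint3).add hint4
  set κ : ℝ := C_K * M * (27 * 2 ^ α * (1 + rt d x) ^ (-α)) with hκdef
  have hPα : (0:ℝ) < (1 + rt d x) ^ (-α) := Real.rpow_pos_of_pos hP0 _
  have hκ0 : 0 ≤ κ := by
    apply mul_nonneg (mul_nonneg hCK.le hM0)
    apply mul_nonneg (mul_nonneg (by norm_num) (by linarith)) hPα.le
  have hΨint : Integrable (fun y : R2 => κ *
      (St11.W (x - y) + St11.N (x - y) + St11.N (y - d • e1) + St11.N (y + d • e1))) :=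
    hsumint.const_mul κ
  have hGm : AEStronglyMeasurable (fun y : R2 => G (x - y)) volume := by
    have hsm : MeasurableSet {y : R2 | y ≠ x} := (measurableSet_singleton x).compl
    have hco : ContinuousOn (fun y : R2 => G (x - y)) {y : R2 | y ≠ x} := by
      apply hGc.comp (Continuous.continuousOn (by continuity))
      intro y hy hzero
      simp only [mem_setOf_eq] at hy hzero
      exact hy (sub_eq_zero.1 hzero).symm
    have h1 : AEStronglyMeasurable (fun y : R2 => G (x - y))
        (volume.restrict {y : R2 | y ≠ x}) := hco.aestronglyMeasurable hsm
    have h2 : {y : R2 | y ≠ x} =ᵐ[volume] (univ : Set R2) := by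
      rw [ae_eq_univ]
      have : ({y : R2 | y ≠ x} : Set R2)ᶜ = {x} := by
        ext y; simp
      rw [this]
      exact St11.null_singleton x
    rwa [Measure.restrict_congr_set h2, Measure.restrict_univ] at h1
  have hF : AEStronglyMeasurable (fun y : R2 => G (x - y) * h y) volume :=
    hGm.mul hhc.aestronglyMeasurable
  have haeB : ∀ᵐ y : R2, ‖G (x - y) * h y‖ ≤ κ *
      (St11.W (x - y) + St11.N (x - y) + St11.N (y - d • e1) + St11.N (y + d • e1)) := by
    have hxne : ∀ᵐ y : R2, y ≠ x := by
      rw [ae_iff]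
      simpa using St11.null_singleton x
    filter_upwards [hxne] with y hy
    have hz : x - y ≠ 0 := fun hc => hy (sub_eq_zero.1 hc).symm
    rw [Real.norm_eq_abs, abs_mul]
    calc |G (x - y)| * |h y| ≤ (C_K * St11.W (x - y)) * (M * (1 + rt d y) ^ (-α)) :=
          mul_le_mul (hGW _ hz) (hh y) (abs_nonneg _)
            (mul_nonneg hCK.le (St11.W_nonneg _))
      _ = (C_K * M) * (St11.W (x - y) * (1 + rt d y) ^ (-α)) := by ring
      _ ≤ (C_K * M) * (27 * 2 ^ α * (1 + rt d x) ^ (-α) *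
          (St11.W (x - y) + St11.N (x - y) + St11.N (y - d • e1) + St11.N (y + d • e1))) :=
          mul_le_mul_of_nonneg_left (St11.key hα0 hα3 d x y) (mul_nonneg hCK.le hM0)
      _ = _ := by rw [hκdef]; ring
  have hFint : Integrable (fun y : R2 => G (x - y) * h y) := hΨint.mono' hF haeB
  refine ⟨hFint, ?_⟩
  have habs : |∫ y : R2, G (x - y) * h y| ≤ ∫ y : R2, |G (x - y) * h y| := by
    have := norm_integral_le_integral_norm (μ := volume) (fun y : R2 => G (x - y) * h y)
    simpa only [Real.norm_eq_abs] using this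
  have hmono : (∫ y : R2, |G (x - y) * h y|) ≤ ∫ y : R2, κ *
      (St11.W (x - y) + St11.N (x - y) + St11.N (y - d • e1) + St11.N (y + d • e1)) := by
    apply integral_mono_ae hFint.abs hΨint
    filter_upwards [haeB] with y hy
    simpa [Real.norm_eq_abs, abs_mul] using hy
  have hval : (∫ y : R2, κ *
      (St11.W (x - y) + St11.N (x - y) + St11.N (y - d • e1) + St11.N (y + d • e1)))
      = κ * (IW + 3 * IN) := by
    rw [MeasureTheory.integral_const_mul]
    congr 1
    have hi12 : Integrable (fun y : R2 => St11.W (x - y) + St11.N (x - y)) :=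
      hint1.add hint2
    have hi123 : Integrable (fun y : R2 =>
        St11.W (x - y) + St11.N (x - y) + St11.N (y - d • e1)) := hi12.add hint3
    rw [integral_add hi123 hint4, integral_add hi12 hint3, integral_add hint1 hint2]
    rw [integral_sub_left_eq_self St11.W volume x, integral_sub_left_eq_self St11.N volume x,
      integral_sub_right_eq_self St11.N (d • e1), integral_add_right_eq_self St11.N (d • e1)]
    rw [hIWdef, hINdef]
    ring
  have hPmono : (1 + rt d x) ^ (-α) ≤ (1 + rt d x) ^ (-α') :=
    Real.rpow_le_rpow_of_exponent_le (by linarith [St11.rt_nonneg d x]) (by linarith)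
  have hPα' : (0:ℝ) < (1 + rt d x) ^ (-α') := Real.rpow_pos_of_pos hP0 _
  calc |∫ y : R2, G (x - y) * h y| ≤ κ * (IW + 3 * IN) := by
        rw [← hval]; exact le_trans habs hmono
    _ = c * M * (1 + rt d x) ^ (-α) := by rw [hκdef, hcdef]; ring
    _ ≤ c * M * (1 + rt d x) ^ (-α') :=
        mul_le_mul_of_nonneg_left hPmono (mul_nonneg hc0 hM0)
    _ ≤ (c + 1) * M * (1 + rt d x) ^ (-α') := by
        apply mul_le_mul_of_nonneg_right (by nlinarith) hPα'.le
    _ = (c + 1) * M / (1 + rt d x) ^ α' := by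
        rw [Real.rpow_neg hP0.le, div_eq_mul_inv]
end
end

section
/- Let ρ : [0,∞) → ℝ be continuously differentiable with ρ(0) = 0, define V(x) := ρ(|x|)·(x₁ + i x₂)/|x| for x ≠ 0 and V(0) := 0, and assume V ∈ C¹(ℝ²,ℂ). Then for every x ≠ 0, with r = |x|, Re(i·∂_{x₂}V(x)·conj(∂_{x₁}V(x))) = −ρ(r)·ρ′(r)/r, and consequently for every R > 0: ∫_{B(0,R)} Re(i·∂_{x₂}V·conj(∂_{x₁}V)) dx = −π·ρ(R)². -/
noncomputable section

open Complex MeasureTheory Filter Topology Set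

lemma sq_ne {x : R2} (hx : x ≠ 0) : x.1 ^ 2 + x.2 ^ 2 ≠ 0 := by
  intro h
  apply hx
  have h1 : x.1 = 0 := by nlinarith [sq_nonneg x.1, sq_nonneg x.2]
  have h2 : x.2 = 0 := by nlinarith [sq_nonneg x.1, sq_nonneg x.2]
  exact Prod.ext h1 h2

lemma rE_pos_s18 {x : R2} (hx : x ≠ 0) : 0 < rE x :=
  Real.sqrt_pos.2 (lt_of_le_of_ne (by positivity) (Ne.symm (sq_ne hx)))

lemma rE_sq_s18 (x : R2) : rE x ^ 2 = x.1 ^ 2 + x.2 ^ 2 := Real.sq_sqrt (by positivity)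

lemma key18 (ρ : ℝ → ℝ) (hρ : ContDiffOn ℝ 1 ρ (Set.Ici 0))
    (V : R2 → ℂ)
    (hVdef : ∀ x : R2, x ≠ 0 →
      V x = (ρ (rE x) : ℂ) * ((x.1 : ℂ) + (x.2 : ℂ) * Complex.I) / (rE x : ℂ))
    (x : R2) (hx : x ≠ 0) :
    (Complex.I * pd2 V x * (starRingEnd ℂ) (pd1 V x)).re
      = -(ρ (rE x) * deriv ρ (rE x)) / rE x := by
  have hr : 0 < rE x := rE_pos_s18 hx
  have hq0 : x.1 ^ 2 + x.2 ^ 2 ≠ 0 := sq_ne hx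
  have hρd : HasDerivAt ρ (deriv ρ (rE x)) (rE x) :=
    ((hρ.contDiffAt (Ici_mem_nhds hr)).differentiableAt one_ne_zero).hasDerivAt
  have hq : HasFDerivAt (fun y : R2 => y.1 ^ 2 + y.2 ^ 2)
      ((((2:ℕ) * x.1 ^ (2-1)) • (ContinuousLinearMap.fst ℝ ℝ ℝ))
        + (((2:ℕ) * x.2 ^ (2-1)) • (ContinuousLinearMap.snd ℝ ℝ ℝ))) x :=
    ((hasDerivAt_pow 2 x.1).comp_hasFDerivAt x hasFDerivAt_fst).add
      ((hasDerivAt_pow 2 x.2).comp_hasFDerivAt x hasFDerivAt_snd)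
  have hs : HasDerivAt Real.sqrt (1 / (2 * Real.sqrt (x.1 ^ 2 + x.2 ^ 2))) (x.1 ^ 2 + x.2 ^ 2) :=
    Real.hasDerivAt_sqrt hq0
  have hrE : HasFDerivAt rE ((1 / (2 * Real.sqrt (x.1 ^ 2 + x.2 ^ 2))) •
      ((((2:ℕ) * x.1 ^ (2-1)) • (ContinuousLinearMap.fst ℝ ℝ ℝ))
        + (((2:ℕ) * x.2 ^ (2-1)) • (ContinuousLinearMap.snd ℝ ℝ ℝ)))) x :=
    hs.comp_hasFDerivAt x hq
  have hinv : HasDerivAt Inv.inv (-(((rE x) ^ 2)⁻¹)) (rE x) := hasDerivAt_inv hr.ne'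
  have hfr := (hρd.comp_hasFDerivAt x hrE).mul (hinv.comp_hasFDerivAt x hrE)
  have hM : HasFDerivAt (fun y : R2 => (y.1 : ℂ) + (y.2 : ℂ) * Complex.I)
      ((Complex.ofRealCLM.comp (ContinuousLinearMap.fst ℝ ℝ ℝ)) +
        Complex.I • (Complex.ofRealCLM.comp (ContinuousLinearMap.snd ℝ ℝ ℝ))) x := by
    have h1 : HasFDerivAt (fun y : R2 => ((y.1 : ℂ)))
        (Complex.ofRealCLM.comp (ContinuousLinearMap.fst ℝ ℝ ℝ)) x :=
      Complex.ofRealCLM.hasFDerivAt.comp x hasFDerivAt_fst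
    have h2 : HasFDerivAt (fun y : R2 => ((y.2 : ℂ)))
        (Complex.ofRealCLM.comp (ContinuousLinearMap.snd ℝ ℝ ℝ)) x :=
      Complex.ofRealCLM.hasFDerivAt.comp x hasFDerivAt_snd
    exact h1.add (h2.mul_const Complex.I)
  have hfC := Complex.ofRealCLM.hasFDerivAt.comp x hfr
  have hW := hfC.mul hM
  have hVW : V =ᶠ[𝓝 x] (fun y => ((ρ (rE y) * (rE y)⁻¹ : ℝ) : ℂ) * ((y.1 : ℂ) + (y.2 : ℂ) * Complex.I)) := by
    filter_upwards [eventually_ne_nhds hx] with y hy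
    rw [hVdef y hy]
    push_cast
    ring
  have hVd : HasFDerivAt V _ x := hW.congr_of_eventuallyEq hVW
  set r := rE x with hrdef
  set A := ρ (rE x) with hAdef
  set B := deriv ρ (rE x) with hBdef
  set a := x.1 with hadef
  set b := x.2 with hbdef
  have hrr : Real.sqrt (a ^ 2 + b ^ 2) = r := rfl
  set C1 : ℝ := A * (-((r ^ 2)⁻¹)) * (1 / (2 * r) * (2 * a ^ 1)) + r⁻¹ * (B * (1 / (2 * r) * (2 * a ^ 1))) with hC1
  set C2 : ℝ := A * (-((r ^ 2)⁻¹)) * (1 / (2 * r) * (2 * b ^ 1)) + r⁻¹ * (B * (1 / (2 * r) * (2 * b ^ 1))) with hC2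
  have h1 : pd1 V x = ((A * r⁻¹ + a * C1 : ℝ) : ℂ) + ((b * C1 : ℝ) : ℂ) * Complex.I := by
    rw [pd1, hVd.fderiv]
    simp only [ContinuousLinearMap.add_apply, ContinuousLinearMap.coe_smul', Pi.smul_apply,
      ContinuousLinearMap.coe_comp', Function.comp_apply, ContinuousLinearMap.coe_fst',
      ContinuousLinearMap.coe_snd', Complex.ofRealCLM_apply, smul_eq_mul, Complex.real_smul,
      hrr, hC1]
    norm_num
    push_cast
    ring
  have h2 : pd2 V x = ((a * C2 : ℝ) : ℂ) + ((A * r⁻¹ + b * C2 : ℝ) : ℂ) * Complex.I := by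
    rw [pd2, hVd.fderiv]
    simp only [ContinuousLinearMap.add_apply, ContinuousLinearMap.coe_smul', Pi.smul_apply,
      ContinuousLinearMap.coe_comp', Function.comp_apply, ContinuousLinearMap.coe_fst',
      ContinuousLinearMap.coe_snd', Complex.ofRealCLM_apply, smul_eq_mul, Complex.real_smul,
      hrr, hC2]
    norm_num
    push_cast
    ring
  rw [h1, h2]
  have hr2 : a ^ 2 + b ^ 2 = r ^ 2 := (rE_sq_s18 x).symm
  have hr0 : r ≠ 0 := hr.ne'
  simp only [Complex.add_re, Complex.add_im, Complex.mul_re, Complex.mul_im, Complex.I_re,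
    Complex.I_im, Complex.ofReal_re, Complex.ofReal_im, Complex.conj_re, Complex.conj_im,
    map_add, map_mul, Complex.conj_I, Complex.conj_ofReal, Complex.neg_re, Complex.neg_im]
  have hu : r * r⁻¹ = 1 := mul_inv_cancel₀ hr0
  field_simp
  linear_combination (-(A*B*r^2*r⁻¹^2) + A^2*r^2*r⁻¹^3) * hr2 +
    (-(A*B*r^2*(r*r⁻¹+1)) + A^2*r*(r^2*r⁻¹^2 + r*r⁻¹ + 1)) * hu +
    (A*B*r⁻¹^2*(r^2-r) + A^2*r⁻¹^3*(r-r^2)) * hr2 +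
    (A*B*(r^2-r)*(r*r⁻¹+1) + A^2*(1-r)*((r*r⁻¹)^2 + r*r⁻¹ + 1)) * hu

lemma part2_aux (ρ : ℝ → ℝ) (hρ : ContDiffOn ℝ 1 ρ (Set.Ici 0)) (hρ0 : ρ 0 = 0)
    (V : R2 → ℂ)
    (hVdef : ∀ x : R2, x ≠ 0 →
      V x = (ρ (rE x) : ℂ) * ((x.1 : ℂ) + (x.2 : ℂ) * Complex.I) / (rE x : ℂ))
    (R : ℝ) (hR : 0 < R) :
      (∫ x in {y : R2 | rE y ≤ R}, (Complex.I * pd2 V x * (starRingEnd ℂ) (pd1 V x)).re)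
        = -Real.pi * ρ R ^ 2 := by
  set F : R2 → ℝ := fun x => (Complex.I * pd2 V x * (starRingEnd ℂ) (pd1 V x)).re with hF
  set g : ℝ → ℝ := fun t => -(ρ t * deriv ρ t) with hg
  have hrEc : Continuous rE := (continuous_fst.pow 2 |>.add (continuous_snd.pow 2)).sqrt
  have hS : MeasurableSet {y : R2 | rE y ≤ R} :=
    (isClosed_le hrEc continuous_const).measurableSet
  -- FTC
  have hcρ : ContinuousOn ρ (Ici 0) := hρ.continuousOn
  have hdeq : ∀ t ∈ Ioi (0:ℝ), deriv ρ t = derivWithin ρ (Ici 0) t := fun t ht =>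
    (derivWithin_of_mem_nhds (Ici_mem_nhds ht)).symm
  have hdW : ContinuousOn (derivWithin ρ (Ici 0)) (Ici 0) :=
    hρ.continuousOn_derivWithin (uniqueDiffOn_Ici 0) le_rfl
  have hhd : ∀ t ∈ Ioo 0 R, HasDerivAt (fun s => ρ s ^ 2 / 2) (ρ t * deriv ρ t) t := by
    intro t ht
    have hd : HasDerivAt ρ (deriv ρ t) t :=
      ((hρ.contDiffAt (Ici_mem_nhds ht.1)).differentiableAt one_ne_zero).hasDerivAt
    have h2 : HasDerivAt (fun s => ρ s ^ 2 / 2) ((deriv ρ t * ρ t + ρ t * deriv ρ t) / 2) t := by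
      simpa [pow_two] using (hd.mul hd).div_const 2
    convert h2 using 1
    ring
  have hint : IntervalIntegrable (fun t => ρ t * deriv ρ t) volume 0 R := by
    rw [intervalIntegrable_iff_integrableOn_Ioc_of_le hR.le]
    have h1 : IntervalIntegrable (fun t => ρ t * derivWithin ρ (Ici 0) t) volume 0 R := by
      apply ContinuousOn.intervalIntegrable
      rw [uIcc_of_le hR.le]
      exact (hcρ.mono (Icc_subset_Ici_self)).mul (hdW.mono (Icc_subset_Ici_self))
    rw [intervalIntegrable_iff_integrableOn_Ioc_of_le hR.le] at h1
    exact h1.congr_fun (fun t ht => by show ρ t * derivWithin ρ (Ici 0) t = ρ t * deriv ρ t; rw [← hdeq t ht.1]) measurableSet_Ioc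
  have hFTC : ∫ t in (0:ℝ)..R, ρ t * deriv ρ t = ρ R ^ 2 / 2 - ρ 0 ^ 2 / 2 := by
    have := intervalIntegral.integral_eq_sub_of_hasDeriv_right_of_le hR.le
      (f := fun s => ρ s ^ 2 / 2) (f' := fun t => ρ t * deriv ρ t) ?_ ?_ hint
    · simpa using this
    · rw [← uIcc_of_le hR.le] at *
      exact ((hcρ.mono (by rw [uIcc_of_le hR.le]; exact Icc_subset_Ici_self)).pow 2).div_const 2
    · exact fun t ht => (hhd t ht).hasDerivWithinAt
  have hIoc : ∫ t in Ioc (0:ℝ) R, g t = -(ρ R ^ 2 / 2) := by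
    rw [← intervalIntegral.integral_of_le hR.le]
    rw [hg]
    simp only []
    rw [intervalIntegral.integral_neg, hFTC, hρ0]
    ring
  -- polar coordinates
  calc ∫ x in {y : R2 | rE y ≤ R}, F x
      = ∫ x, ({y : R2 | rE y ≤ R}).indicator F x := (integral_indicator hS).symm
    _ = ∫ p in polarCoord.target, p.1 • ({y : R2 | rE y ≤ R}).indicator F (polarCoord.symm p) :=
        (integral_comp_polarCoord_symm _).symm
    _ = ∫ p in (Ioi (0:ℝ)) ×ˢ (Ioo (-Real.pi) Real.pi),
          (Iic R).indicator g p.1 * (fun _ : ℝ => (1:ℝ)) p.2 := by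
        apply setIntegral_congr_fun (measurableSet_Ioi.prod measurableSet_Ioo)
        rintro ⟨t, θ⟩ ⟨ht, hθ⟩
        simp only [mem_Ioi] at ht
        dsimp only
        have hsymm : polarCoord.symm (t, θ) = (t * Real.cos θ, t * Real.sin θ) := rfl
        have hrEs : rE (polarCoord.symm (t, θ)) = t := by
          rw [hsymm]
          show Real.sqrt ((t * Real.cos θ) ^ 2 + (t * Real.sin θ) ^ 2) = t
          have : (t * Real.cos θ) ^ 2 + (t * Real.sin θ) ^ 2 = t ^ 2 := by
            have := Real.sin_sq_add_cos_sq θ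
            nlinarith
          rw [this, Real.sqrt_sq ht.le]
        have hne : polarCoord.symm (t, θ) ≠ 0 := by
          intro h
          rw [h] at hrEs
          simp [rE] at hrEs
          exact ht.ne' hrEs.symm
        rw [Set.indicator_apply, Set.indicator_apply]
        simp only [mem_setOf_eq, hrEs, mem_Iic, mul_one]
        by_cases hle : t ≤ R
        · rw [if_pos hle, if_pos hle, hF]
          simp only []
          rw [key18 ρ hρ V hVdef _ hne, hrEs, smul_eq_mul, hg]
          field_simp
        · rw [if_neg hle, if_neg hle, smul_zero]
    _ = (∫ t in Ioi (0:ℝ), (Iic R).indicator g t) * (∫ θ in Ioo (-Real.pi) Real.pi, (1:ℝ)) := by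
        rw [MeasureTheory.Measure.volume_eq_prod]
        exact setIntegral_prod_mul ((Iic R).indicator g) (fun _ => (1:ℝ)) _ _
    _ = -Real.pi * ρ R ^ 2 := by
        rw [setIntegral_indicator measurableSet_Iic, Ioi_inter_Iic, hIoc]
        rw [setIntegral_const]
        simp only [smul_eq_mul, mul_one, Real.volume_Ioo]
        rw [measureReal_def, Real.volume_Ioo, ENNReal.toReal_ofReal (by linarith [Real.pi_pos])]
        ring


/-- For a vortex-shaped `C¹` map `V(x) = ρ(|x|)(x₁+ix₂)/|x|` one has
`Re(i ∂₂V conj(∂₁V)) = −ρρ′/r` away from the origin, and the integral over the Euclidean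
ball of radius `R` equals `−π ρ(R)²`. -/
theorem statement18 (ρ : ℝ → ℝ) (hρ : ContDiffOn ℝ 1 ρ (Set.Ici 0)) (hρ0 : ρ 0 = 0)
    (V : R2 → ℂ)
    (hVdef : ∀ x : R2, x ≠ 0 →
      V x = (ρ (rE x) : ℂ) * ((x.1 : ℂ) + (x.2 : ℂ) * Complex.I) / (rE x : ℂ))
    (hV : ContDiff ℝ 1 V) :
    (∀ x : R2, x ≠ 0 →
      (Complex.I * pd2 V x * (starRingEnd ℂ) (pd1 V x)).re
        = -(ρ (rE x) * deriv ρ (rE x)) / rE x) ∧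
    ∀ R : ℝ, 0 < R →
      (∫ x in {y : R2 | rE y ≤ R}, (Complex.I * pd2 V x * (starRingEnd ℂ) (pd1 V x)).re)
        = -Real.pi * ρ R ^ 2 := by
  constructor
  · exact fun x hx => key18 ρ hρ V hVdef x hx
  · exact fun R hR => part2_aux ρ hρ hρ0 V hVdef R hR
end
end
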